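/- For every n ≥ 2, removing the single edge x_{(n−1)2}x_{n2} from G_{n,3} increases the total domination number; hence b_t(G_{n,3}) = 1. -/
import Mathlib


open SimpleGraph

/-- The grid graph `G_{n,m}`, the Cartesian (box) product of paths `P_n` and `P_m`. -/
def gridGraph (n m : ℕ) : SimpleGraph (Fin n × Fin m) :=
  (pathGraph n) □ (pathGraph m)

/-- `D` is a total dominating set of `G`: every vertex has a neighbor in `D`. -/
def IsTotalDomSet {V : Type*} (G : SimpleGraph V) (D : Set V) : Prop :=
  ∀ v : V, ∃ u ∈ D, G.Adj v u

/-- The total domination number of `G`. -/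
noncomputable def totalDomNum {V : Type*} [Fintype V] (G : SimpleGraph V) : ℕ :=
  sInf {k | ∃ D : Finset V, IsTotalDomSet G ↑D ∧ D.card = k}

/-- The total bondage number: the least number of edges whose removal increases
the total domination number. -/
noncomputable def totalBondage {V : Type*} [Fintype V] (G : SimpleGraph V) : ℕ :=
  sInf {k | ∃ F : Finset (Sym2 V), ↑F ⊆ G.edgeSet ∧ F.card = k ∧
    totalDomNum (G.deleteEdges ↑F) > totalDomNum G}

section Aux

open Finset

variable {n : ℕ}

lemma grid_adj {v u : Fin n × Fin 3} :
    (gridGraph n 3).Adj v u ↔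
      ((v.1.val + 1 = u.1.val ∨ u.1.val + 1 = v.1.val) ∧ v.2 = u.2) ∨
      ((v.2.val + 1 = u.2.val ∨ u.2.val + 1 = v.2.val) ∧ v.1 = u.1) := by
  simp [gridGraph, boxProd_adj, pathGraph_adj]

/-- The set of "outer" vertices: columns 0 and 2. -/
def outerSet (n : ℕ) : Finset (Fin n × Fin 3) :=
  Finset.univ ×ˢ ({0, 2} : Finset (Fin 3))

lemma mem_outerSet {v : Fin n × Fin 3} :
    v ∈ outerSet n ↔ v.2 = 0 ∨ v.2 = 2 := by
  simp [outerSet]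

lemma card_outerSet : (outerSet n).card = n * 2 := by
  simp [outerSet]

lemma fin3_val0 {j : Fin 3} (h : j = 0 ∨ j = 2) : j.val = 0 ∨ j.val = 2 := by
  rcases h with h | h <;> subst h <;> simp

lemma fin3_eq_of_val {j k : Fin 3} (h : j.val = k.val) : j = k := Fin.ext h

/-- Any vertex has at most two outer neighbors in the grid. -/
lemma card_adj_le_two (u : Fin n × Fin 3) {T : Finset (Fin n × Fin 3)}
    (hT : ∀ v ∈ T, (v.2 = 0 ∨ v.2 = 2) ∧ (gridGraph n 3).Adj v u) :
    T.card ≤ 2 := by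
  have h2 : (Finset.univ : Finset Bool).card = 2 := by simp
  rw [← h2]
  apply Finset.card_le_card_of_injOn
    (fun v => if u.2 = (1 : Fin 3) then decide (v.2 = (0 : Fin 3))
      else decide (v.1.val + 1 = u.1.val)) (fun _ _ => Finset.mem_univ _)
  intro v hv w hw hgvw
  obtain ⟨hv0, hvadj⟩ := hT v hv
  obtain ⟨hw0, hwadj⟩ := hT w hw
  rw [grid_adj] at hvadj hwadj
  have hv2 := fin3_val0 hv0
  have hw2 := fin3_val0 hw0
  by_cases hu : u.2 = (1 : Fin 3)
  · have hu1 : u.2.val = 1 := by rw [hu]; decide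
    simp only [hu, if_pos] at hgvw
    have hiff : (v.2 = (0:Fin 3)) ↔ (w.2 = (0:Fin 3)) := by
      simpa using decide_eq_decide.mp hgvw
    have hvc : v.1 = u.1 ∧ (v.2.val + 1 = u.2.val ∨ u.2.val + 1 = v.2.val) := by
      rcases hvadj with ⟨_, h⟩ | ⟨h, h'⟩
      · exfalso
        have hcv : v.2.val = 1 := by rw [h]; exact hu1
        omega
      · exact ⟨h', h⟩
    have hwc : w.1 = u.1 ∧ (w.2.val + 1 = u.2.val ∨ u.2.val + 1 = w.2.val) := by
      rcases hwadj with ⟨_, h⟩ | ⟨h, h'⟩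
      · exfalso
        have hcw : w.2.val = 1 := by rw [h]; exact hu1
        omega
      · exact ⟨h', h⟩
    have hvw2 : v.2.val = w.2.val := by
      by_cases h0 : v.2 = (0:Fin 3)
      · rw [h0, hiff.mp h0]
      · have hwne : w.2 ≠ (0:Fin 3) := fun hc => h0 (hiff.mpr hc)
        have hv' : v.2.val ≠ 0 := fun hc => h0 (fin3_eq_of_val hc)
        have hw' : w.2.val ≠ 0 := fun hc => hwne (fin3_eq_of_val hc)
        omega
    exact Prod.ext (hvc.1.trans hwc.1.symm) (fin3_eq_of_val hvw2)
  · have hu1 : u.2.val ≠ 1 := fun hc => hu (fin3_eq_of_val hc)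
    have hu3 : u.2.val < 3 := u.2.isLt
    simp only [hu, if_neg, if_false] at hgvw
    have hiff : (v.1.val + 1 = u.1.val) ↔ (w.1.val + 1 = u.1.val) := by
      simpa using decide_eq_decide.mp hgvw
    have hvc : (v.1.val + 1 = u.1.val ∨ u.1.val + 1 = v.1.val) ∧ v.2 = u.2 := by
      rcases hvadj with ⟨h, h'⟩ | ⟨h, _⟩
      · exact ⟨h, h'⟩
      · exfalso; omega
    have hwc : (w.1.val + 1 = u.1.val ∨ u.1.val + 1 = w.1.val) ∧ w.2 = u.2 := by
      rcases hwadj with ⟨h, h'⟩ | ⟨h, _⟩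
      · exact ⟨h, h'⟩
      · exfalso; omega
    have hvw1 : v.1.val = w.1.val := by
      rcases hvc.1 with h | h <;> rcases hwc.1 with h' | h' <;> omega
    exact Prod.ext (Fin.ext hvw1) (hvc.2.trans hwc.2.symm)

/-- A last-row outer vertex has at most one outer neighbor. -/
lemma card_adj_le_one (u : Fin n × Fin 3) (hu2 : u.2 ≠ 1) (hu1 : u.1.val = n - 1)
    {T : Finset (Fin n × Fin 3)}
    (hT : ∀ v ∈ T, (v.2 = 0 ∨ v.2 = 2) ∧ (gridGraph n 3).Adj v u) :
    T.card ≤ 1 := by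
  rw [Finset.card_le_one]
  intro v hv w hw
  obtain ⟨hv0, hvadj⟩ := hT v hv
  obtain ⟨hw0, hwadj⟩ := hT w hw
  rw [grid_adj] at hvadj hwadj
  have hv2 := fin3_val0 hv0
  have hw2 := fin3_val0 hw0
  have hu1' : u.2.val ≠ 1 := fun hc => hu2 (fin3_eq_of_val hc)
  have hu3 : u.2.val < 3 := u.2.isLt
  have hvn : v.1.val < n := v.1.isLt
  have hwn : w.1.val < n := w.1.isLt
  have hun : u.1.val < n := u.1.isLt
  have hvc : (v.1.val + 1 = u.1.val ∨ u.1.val + 1 = v.1.val) ∧ v.2 = u.2 := by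
    rcases hvadj with ⟨h, h'⟩ | ⟨h, _⟩
    · exact ⟨h, h'⟩
    · exfalso; omega
  have hwc : (w.1.val + 1 = u.1.val ∨ u.1.val + 1 = w.1.val) ∧ w.2 = u.2 := by
    rcases hwadj with ⟨h, h'⟩ | ⟨h, _⟩
    · exact ⟨h, h'⟩
    · exfalso; omega
  have hvw1 : v.1.val = w.1.val := by
    rcases hvc.1 with h | h <;> rcases hwc.1 with h' | h' <;> omega
  exact Prod.ext (Fin.ext hvw1) (hvc.2.trans hwc.2.symm)

/-- Lower bound: any total dominating set of the grid has at least `n` vertices. -/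
lemma grid_tds_lower {D : Finset (Fin n × Fin 3)}
    (hD : IsTotalDomSet (gridGraph n 3) ↑D) : n ≤ D.card := by
  classical
  choose f hf1 hf2 using hD
  have hmap : ∀ v ∈ outerSet n, f v ∈ D := fun v _ => hf1 v
  have hbound : ∀ u ∈ D, ((outerSet n).filter fun v => f v = u).card ≤ 2 := by
    intro u _
    apply card_adj_le_two u
    intro v hv
    rw [Finset.mem_filter] at hv
    exact ⟨mem_outerSet.mp hv.1, hv.2 ▸ hf2 v⟩
  have := Finset.card_le_mul_card_image_of_maps_to hmap 2 hbound
  rw [card_outerSet] at this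
  omega

/-- Lower bound for the grid with an edge joining the two last middle vertices deleted. -/
lemma grid_del_tds_lower (hn : 2 ≤ n) {D : Finset (Fin n × Fin 3)}
    {E : Set (Sym2 (Fin n × Fin 3))} (a b : Fin n × Fin 3)
    (ha1 : a.1.val = n - 2) (ha2 : a.2 = 1) (hb1 : b.1.val = n - 1) (hb2 : b.2 = 1)
    (hE : s(a, b) ∈ E)
    (hD : IsTotalDomSet ((gridGraph n 3).deleteEdges E) ↑D) :
    n + 1 ≤ D.card := by
  classical
  choose f hf1 hf2 using hD
  have hadjG : ∀ v, (gridGraph n 3).Adj v (f v) := fun v => (deleteEdges_adj.mp (hf2 v)).1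
  have hu₀D : f b ∈ D := hf1 b
  have hne : s(b, f b) ∉ E := (deleteEdges_adj.mp (hf2 b)).2
  have hb2' : b.2.val = 1 := by rw [hb2]; decide
  have ha2' : a.2.val = 1 := by rw [ha2]; decide
  -- f b is an outer vertex in the last row
  have hu₀prop : (f b).2 ≠ 1 ∧ (f b).1.val = n - 1 := by
    have hadj := hadjG b
    rw [grid_adj] at hadj
    have hu0n : (f b).1.val < n := (f b).1.isLt
    rcases hadj with ⟨h, h'⟩ | ⟨h, h'⟩
    · exfalso
      have hval : (f b).1.val = n - 2 := by omega
      have h2 : (f b).2.val = 1 := by rw [← h']; exact hb2'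
      have hfa : f b = a :=
        Prod.ext (Fin.ext (by rw [hval, ha1])) (fin3_eq_of_val (by rw [h2, ha2']))
      apply hne
      rw [hfa, Sym2.eq_swap]
      exact hE
    · constructor
      · intro hc
        have hcv : (f b).2.val = 1 := by rw [hc]; decide
        omega
      · rw [← h', hb1]
  -- double counting
  have hmap : ∀ v ∈ outerSet n, f v ∈ D := fun v _ => hf1 v
  have hcardsum : (outerSet n).card =
      ∑ u ∈ D, ((outerSet n).filter fun v => f v = u).card :=
    Finset.card_eq_sum_card_fiberwise hmap
  have hbound : ∀ u ∈ D.erase (f b), ((outerSet n).filter fun v => f v = u).card ≤ 2 := by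
    intro u _
    apply card_adj_le_two u
    intro v hv
    rw [Finset.mem_filter] at hv
    exact ⟨mem_outerSet.mp hv.1, hv.2 ▸ hadjG v⟩
  have hbound0 : ((outerSet n).filter fun v => f v = f b).card ≤ 1 := by
    apply card_adj_le_one (f b) hu₀prop.1 hu₀prop.2
    intro v hv
    rw [Finset.mem_filter] at hv
    exact ⟨mem_outerSet.mp hv.1, hv.2 ▸ hadjG v⟩
  have hsplit : ∑ u ∈ D, ((outerSet n).filter fun v => f v = u).card =
      ((outerSet n).filter fun v => f v = f b).card +
      ∑ u ∈ D.erase (f b), ((outerSet n).filter fun v => f v = u).card :=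
    (Finset.add_sum_erase D _ hu₀D).symm
  have hrest : ∑ u ∈ D.erase (f b), ((outerSet n).filter fun v => f v = u).card ≤
      (D.erase (f b)).card * 2 := by
    calc ∑ u ∈ D.erase (f b), ((outerSet n).filter fun v => f v = u).card
        ≤ (D.erase (f b)).card • 2 := Finset.sum_le_card_nsmul _ _ 2 hbound
      _ = (D.erase (f b)).card * 2 := by rw [smul_eq_mul]
  have hcarderase : (D.erase (f b)).card = D.card - 1 := Finset.card_erase_of_mem hu₀D
  have hDpos : 1 ≤ D.card := Finset.card_pos.mpr ⟨f b, hu₀D⟩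
  have h1 := card_outerSet (n := n)
  omega

/-- The middle column is a total dominating set. -/
lemma middle_tds (hn : 2 ≤ n) :
    IsTotalDomSet (gridGraph n 3)
      ↑((Finset.univ : Finset (Fin n)).image fun i => (i, (1 : Fin 3))) := by
  intro v
  by_cases h : v.2 = 1
  · by_cases h2 : v.1.val + 1 < n
    · refine ⟨(⟨v.1.val + 1, h2⟩, 1), by simp, ?_⟩
      rw [grid_adj]
      exact Or.inl ⟨Or.inl rfl, h⟩
    · have hv1 : v.1.val < n := v.1.isLt
      refine ⟨(⟨v.1.val - 1, by omega⟩, 1), by simp, ?_⟩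
      rw [grid_adj]
      refine Or.inl ⟨Or.inr ?_, h⟩
      show v.1.val - 1 + 1 = v.1.val
      omega
  · refine ⟨(v.1, 1), by simp, ?_⟩
    rw [grid_adj]
    refine Or.inr ⟨?_, rfl⟩
    have hv3 : v.2.val < 3 := v.2.isLt
    have hv1 : v.2.val ≠ 1 := fun hc => h (fin3_eq_of_val hc)
    show (v.2 : ℕ) + 1 = 1 ∨ 1 + 1 = (v.2 : ℕ)
    omega

/-- The whole vertex set totally dominates the grid minus a middle-column edge. -/
lemma univ_tds_del (a b : Fin n × Fin 3) (ha2 : a.2 = 1) (hb2 : b.2 = 1) :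
    IsTotalDomSet ((gridGraph n 3).deleteEdges {s(a, b)})
      ↑(Finset.univ : Finset (Fin n × Fin 3)) := by
  intro v
  by_cases h : v.2 = 1
  · refine ⟨(v.1, 0), by simp, ?_⟩
    rw [deleteEdges_adj]
    constructor
    · rw [grid_adj]
      refine Or.inr ⟨Or.inr ?_, rfl⟩
      show (0 : ℕ) + 1 = (v.2 : ℕ)
      rw [h]; decide
    · intro hc
      rw [Set.mem_singleton_iff, Sym2.eq_iff] at hc
      rcases hc with ⟨_, h2⟩ | ⟨_, h2⟩
      · have h3 : (0 : Fin 3) = 1 := by rw [← hb2]; exact congrArg Prod.snd h2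
        exact absurd h3 (by decide)
      · have h3 : (0 : Fin 3) = 1 := by rw [← ha2]; exact congrArg Prod.snd h2
        exact absurd h3 (by decide)
  · refine ⟨(v.1, 1), by simp, ?_⟩
    rw [deleteEdges_adj]
    constructor
    · rw [grid_adj]
      refine Or.inr ⟨?_, rfl⟩
      have hv3 : v.2.val < 3 := v.2.isLt
      have hv1 : v.2.val ≠ 1 := fun hc => h (fin3_eq_of_val hc)
      show (v.2 : ℕ) + 1 = 1 ∨ 1 + 1 = (v.2 : ℕ)
      omega
    · intro hc
      rw [Set.mem_singleton_iff, Sym2.eq_iff] at hc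
      rcases hc with ⟨h2, _⟩ | ⟨h2, _⟩
      · exact h (by rw [← ha2]; exact congrArg Prod.snd h2)
      · exact h (by rw [← hb2]; exact congrArg Prod.snd h2)

end Aux

theorem total_bondage_grid_three (n : ℕ) (hn : 2 ≤ n) :
    totalDomNum ((gridGraph n 3).deleteEdges
        {s(((⟨n - 2, by omega⟩ : Fin n), (1 : Fin 3)), ((⟨n - 1, by omega⟩ : Fin n), (1 : Fin 3)))})
      > totalDomNum (gridGraph n 3) ∧
    totalBondage (gridGraph n 3) = 1 := by
  classical
  have hmidcard : ((Finset.univ : Finset (Fin n)).image fun i => (i, (1 : Fin 3))).card = n := by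
    rw [Finset.card_image_of_injective _ (fun i j hij => congrArg Prod.fst hij)]
    simp
  have htdn : totalDomNum (gridGraph n 3) = n := by
    unfold totalDomNum
    apply le_antisymm
    · exact Nat.sInf_le ⟨_, middle_tds hn, hmidcard⟩
    · exact le_csInf ⟨n, _, middle_tds hn, hmidcard⟩
        (fun k hk => by obtain ⟨D, hD, rfl⟩ := hk; exact grid_tds_lower hD)
  have htdn' : n + 1 ≤ totalDomNum ((gridGraph n 3).deleteEdges
      {s(((⟨n - 2, by omega⟩ : Fin n), (1 : Fin 3)),
         ((⟨n - 1, by omega⟩ : Fin n), (1 : Fin 3)))}) := by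
    unfold totalDomNum
    apply le_csInf
    · exact ⟨(Finset.univ : Finset (Fin n × Fin 3)).card, _,
        univ_tds_del ((⟨n - 2, by omega⟩ : Fin n), (1 : Fin 3))
          ((⟨n - 1, by omega⟩ : Fin n), (1 : Fin 3)) rfl rfl, rfl⟩
    · rintro k ⟨D, hD, rfl⟩
      exact grid_del_tds_lower hn
        (E := {s(((⟨n - 2, by omega⟩ : Fin n), (1 : Fin 3)),
          ((⟨n - 1, by omega⟩ : Fin n), (1 : Fin 3)))})
        ((⟨n - 2, by omega⟩ : Fin n), (1 : Fin 3))
        ((⟨n - 1, by omega⟩ : Fin n), (1 : Fin 3))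
        rfl rfl rfl rfl (Set.mem_singleton _) hD
  have hlt : totalDomNum (gridGraph n 3) < n + 1 := by rw [htdn]; omega
  have hmain : totalDomNum ((gridGraph n 3).deleteEdges
      {s(((⟨n - 2, by omega⟩ : Fin n), (1 : Fin 3)),
         ((⟨n - 1, by omega⟩ : Fin n), (1 : Fin 3)))}) > totalDomNum (gridGraph n 3) :=
    lt_of_lt_of_le hlt htdn'
  refine ⟨hmain, ?_⟩
  have h1mem : 1 ∈ {k | ∃ F : Finset (Sym2 (Fin n × Fin 3)),
      ↑F ⊆ (gridGraph n 3).edgeSet ∧ F.card = k ∧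
      totalDomNum ((gridGraph n 3).deleteEdges ↑F) > totalDomNum (gridGraph n 3)} := by
    refine ⟨{s(((⟨n - 2, by omega⟩ : Fin n), (1 : Fin 3)),
      ((⟨n - 1, by omega⟩ : Fin n), (1 : Fin 3)))}, ?_, by simp, ?_⟩
    · intro x hx
      simp only [Finset.coe_singleton, Set.mem_singleton_iff] at hx
      subst hx
      rw [SimpleGraph.mem_edgeSet, grid_adj]
      refine Or.inl ⟨Or.inl ?_, rfl⟩
      show n - 2 + 1 = n - 1
      omega
    · rw [Finset.coe_singleton]
      exact hmain
  have h0 : ∀ k ∈ {k | ∃ F : Finset (Sym2 (Fin n × Fin 3)),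
      ↑F ⊆ (gridGraph n 3).edgeSet ∧ F.card = k ∧
      totalDomNum ((gridGraph n 3).deleteEdges ↑F) > totalDomNum (gridGraph n 3)}, k ≠ 0 := by
    rintro k ⟨F, _, rfl, hgt⟩ hk
    rw [Finset.card_eq_zero] at hk
    subst hk
    simp only [Finset.coe_empty, SimpleGraph.deleteEdges_empty] at hgt
    exact lt_irrefl _ hgt
  have hle : totalBondage (gridGraph n 3) ≤ 1 := Nat.sInf_le h1mem
  have hmemInf := Nat.sInf_mem (⟨1, h1mem⟩ :
    Set.Nonempty {k | ∃ F : Finset (Sym2 (Fin n × Fin 3)),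
      ↑F ⊆ (gridGraph n 3).edgeSet ∧ F.card = k ∧
      totalDomNum ((gridGraph n 3).deleteEdges ↑F) > totalDomNum (gridGraph n 3)})
  have hne0 := h0 _ hmemInf
  unfold totalBondage at *
  omega
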